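/- Let v be a henselian valuation on a field K with residue field Kv of characteristic different from 2, and suppose Kv is real (so s(Kv) = ∞). Then p(K) = p(Kv). -/

import Mathlib

/-- `a` is a sum of `n` squares in `R`. -/
def IsSumSqN {R : Type*} [CommRing R] (n : ℕ) (a : R) : Prop :=
  ∃ x : Fin n → R, a = ∑ i, x i ^ 2

/-- `a` is a sum of squares in `R`. -/
def IsSOS {R : Type*} [CommRing R] (a : R) : Prop := ∃ n, IsSumSqN n a

/-- The level `s(R)`. -/
noncomputable def levelN (R : Type*) [CommRing R] : ℕ∞ :=
  sInf {n : ℕ∞ | ∃ m : ℕ, (m : ℕ∞) = n ∧ IsSumSqN m (-1 : R)}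

/-- The Pythagoras number `p(R)`. -/
noncomputable def pythNum (R : Type*) [CommRing R] : ℕ∞ :=
  sInf {n : ℕ∞ | ∃ m : ℕ, (m : ℕ∞) = n ∧ ∀ a : R, IsSOS a → IsSumSqN m a}

open Classical in
/-- The modified Pythagoras number `p'(R)`. -/
noncomputable def pythNum' (R : Type*) [CommRing R] : ℕ∞ :=
  if ¬ IsSOS (-1 : R) ∨ ringChar R = 2 then pythNum R else levelN R + 1

open IsLocalRing Polynomial in
/-- Hensel lifting of square roots of units with residue 1. -/
lemma aux_sq_lift {R : Type*} [CommRing R] [HenselianLocalRing R]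
    (h2 : (2 : ResidueField R) ≠ 0) {u : R} (hu : residue R u = 1) :
    ∃ w : R, w ^ 2 = u := by
  obtain ⟨a, ha, -⟩ := HenselianLocalRing.is_henselian (X ^ 2 - C u)
    (monic_X_pow_sub_C u two_ne_zero) 1
    (by rw [← residue_eq_zero_iff]; simp [hu])
    (by
      have : (X ^ 2 - C u : R[X]).derivative.eval 1 = 2 := by
        simp [derivative_sub, derivative_X_pow, one_add_one_eq_two]
      rw [this, ← notMem_maximalIdeal, ← residue_eq_zero_iff, map_ofNat]
      exact h2)
  exact ⟨a, by simpa [Polynomial.IsRoot, sub_eq_zero] using ha⟩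

/-- A unit of a valuation subring has valuation 1. -/
lemma aux_val_unit {K : Type*} [Field K] {Γ₀ : Type*} [LinearOrderedCommGroupWithZero Γ₀]
    (v : Valuation K Γ₀) {s : v.valuationSubring} (hs : IsUnit s) : v (s : K) = 1 := by
  obtain ⟨t, hst⟩ := isUnit_iff_exists_inv.mp hs
  have h1 : v (s : K) * v (t : K) = 1 := by
    have : (s : K) * (t : K) = 1 := by exact_mod_cast congrArg Subtype.val hst
    rw [← map_mul, this, map_one]
  refine le_antisymm s.2 ?_
  calc (1 : Γ₀) = v (s : K) * v (t : K) := h1.symm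
    _ ≤ v (s : K) * 1 := mul_le_mul_right t.2 _
    _ = v (s : K) := mul_one _

lemma aux_sos_finset {R : Type*} [CommRing R] {n : ℕ} (t : Finset (Fin n)) (y : Fin n → R) :
    IsSOS (∑ i ∈ t, y i ^ 2) := by
  refine ⟨n, fun i => if i ∈ t then y i else 0, ?_⟩
  rw [eq_comm]
  have : ∀ i : Fin n, (if i ∈ t then y i else 0) ^ 2 = if i ∈ t then y i ^ 2 else 0 := by
    intro i; split <;> simp
  simp only [this, Finset.sum_ite_mem, Finset.univ_inter]

lemma aux_sum_ne_zero {R : Type*} [CommRing R] (hreal : ¬ IsSOS (-1 : R)) {n : ℕ}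
    (y : Fin n → R) (j : Fin n) (hyj : y j = 1) : ∑ i, y i ^ 2 ≠ 0 := by
  intro h
  apply hreal
  have h1 : y j ^ 2 + ∑ i ∈ Finset.univ.erase j, y i ^ 2 = ∑ i, y i ^ 2 :=
    Finset.add_sum_erase _ (fun i => y i ^ 2) (Finset.mem_univ j)
  have h2 : (-1 : R) = ∑ i ∈ Finset.univ.erase j, y i ^ 2 := by
    rw [hyj, h, one_pow] at h1; linear_combination -h1
  rw [h2]
  exact aux_sos_finset _ _

open IsLocalRing in
lemma aux_sum_sq_val {K : Type*} [Field K] {Γ₀ : Type*} [LinearOrderedCommGroupWithZero Γ₀]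
    (v : Valuation K Γ₀)
    (hreal : ¬ IsSOS (-1 : ResidueField v.valuationSubring))
    {n : ℕ} (x : Fin n → K) (j : Fin n) : v (x j) ^ 2 ≤ v (∑ i, x i ^ 2) := by
  by_cases hz : ∀ i, x i = 0
  · simp [hz]
  push_neg at hz
  obtain ⟨i₀, hi₀⟩ := hz
  obtain ⟨j₀, -, hj₀⟩ := Finset.exists_max_image Finset.univ (fun i => v (x i))
    ⟨i₀, Finset.mem_univ _⟩
  have hxj₀ : x j₀ ≠ 0 := by
    intro h
    have h' := hj₀ i₀ (Finset.mem_univ _)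
    rw [h, map_zero, le_zero_iff] at h'
    exact hi₀ (v.zero_iff.mp h')
  have hvj₀ : v (x j₀) ≠ 0 := fun h => hxj₀ (v.zero_iff.mp h)
  have hb : ∀ i, x i / x j₀ ∈ v.valuationSubring := by
    intro i
    rw [Valuation.mem_valuationSubring_iff, map_div₀]
    exact div_le_one_of_le₀ (hj₀ i (Finset.mem_univ _)) zero_le'
  set B : Fin n → v.valuationSubring := fun i => ⟨x i / x j₀, hb i⟩ with hB
  have hBj₀ : B j₀ = 1 := by
    ext; simp [hB, div_self hxj₀]
  have hres : residue v.valuationSubring (∑ i, B i ^ 2) ≠ 0 := by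
    rw [map_sum]
    simp only [map_pow]
    exact aux_sum_ne_zero hreal _ j₀ (by rw [hBj₀, map_one])
  have hunit : IsUnit (∑ i, B i ^ 2) := by
    rw [← notMem_maximalIdeal, ← residue_eq_zero_iff] at *
    exact hres
  have hval : v ((∑ i, B i ^ 2 : v.valuationSubring) : K) = 1 := aux_val_unit v hunit
  have hcoe : ((∑ i, B i ^ 2 : v.valuationSubring) : K) = ∑ i, (x i / x j₀) ^ 2 := by
    push_cast [hB]; rfl
  have hsum : ∑ i, x i ^ 2 = x j₀ ^ 2 * ∑ i, (x i / x j₀) ^ 2 := by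
    rw [Finset.mul_sum]
    refine Finset.sum_congr rfl fun i _ => ?_
    field_simp
  calc v (x j) ^ 2 ≤ v (x j₀) ^ 2 := pow_le_pow_left' (hj₀ j (Finset.mem_univ _)) 2
    _ = v (∑ i, x i ^ 2) := by
        rw [hsum, map_mul, map_pow, ← hcoe, hval, mul_one]

open IsLocalRing in
theorem pyth_eq_pyth_residue_of_henselian_real {K : Type*} [Field K] {Γ₀ : Type*}
    [LinearOrderedCommGroupWithZero Γ₀] (v : Valuation K Γ₀)
    [HenselianLocalRing v.valuationSubring]
    (h2 : ringChar (IsLocalRing.ResidueField v.valuationSubring) ≠ 2)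
    (hreal : ¬ IsSOS (-1 : IsLocalRing.ResidueField v.valuationSubring)) :
    pythNum K = pythNum (IsLocalRing.ResidueField v.valuationSubring) := by
  have h2' : (2 : ResidueField v.valuationSubring) ≠ 0 := Ring.two_ne_zero h2
  suffices hiff : ∀ m : ℕ, (∀ a : K, IsSOS a → IsSumSqN m a) ↔
      (∀ a : ResidueField v.valuationSubring, IsSOS a → IsSumSqN m a) by
    unfold pythNum
    congr 1
    ext N
    simp only [Set.mem_setOf_eq]
    exact exists_congr fun m => and_congr_right fun _ => hiff m
  intro m
  constructor
  · -- from K to residue field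
    rintro hK abar ⟨N, ybar, hybar⟩
    choose y hy using fun i => residue_surjective (R := v.valuationSubring) (ybar i)
    obtain ⟨x, hx⟩ := hK ((∑ i, y i ^ 2 : v.valuationSubring) : K)
      ⟨N, fun i => (y i : K), by push_cast; rfl⟩
    have hxl : ∀ l, x l ∈ v.valuationSubring := by
      intro l
      rw [Valuation.mem_valuationSubring_iff]
      have h1 : v (x l) ^ 2 ≤ v (∑ i, x i ^ 2) := aux_sum_sq_val v hreal x l
      rw [← hx] at h1
      have hle : v (x l) ^ 2 ≤ 1 := le_trans h1 (∑ i, y i ^ 2 : v.valuationSubring).2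
      by_contra hgt
      push_neg at hgt
      exact absurd hle (not_le.mpr (one_lt_pow₀ hgt two_ne_zero))
    set X : Fin m → v.valuationSubring := fun l => ⟨x l, hxl l⟩ with hX
    refine ⟨fun l => residue _ (X l), ?_⟩
    have hsum : (∑ i, y i ^ 2 : v.valuationSubring) = ∑ l, X l ^ 2 := by
      apply Subtype.ext
      push_cast [hX]
      rw [← hx]
      push_cast
      rfl
    calc abar = residue _ (∑ i, y i ^ 2) := by
            rw [map_sum]; simp only [map_pow, hy]; exact hybar
      _ = ∑ l, residue _ (X l) ^ 2 := by rw [hsum, map_sum]; simp only [map_pow]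
  · -- from residue field to K
    rintro hk a ⟨N, x, rfl⟩
    by_cases ha : (∑ i, x i ^ 2 : K) = 0
    · exact ⟨0, by simp [ha]⟩
    have hz : ∃ i, x i ≠ 0 := by
      by_contra h; push_neg at h; exact ha (by simp [h])
    obtain ⟨i₀, hi₀⟩ := hz
    obtain ⟨j₀, -, hj₀⟩ := Finset.exists_max_image Finset.univ (fun i => v (x i))
      ⟨i₀, Finset.mem_univ _⟩
    have hxj₀ : x j₀ ≠ 0 := by
      intro h
      have h' := hj₀ i₀ (Finset.mem_univ _)
      rw [h, map_zero, le_zero_iff] at h'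
      exact hi₀ (v.zero_iff.mp h')
    have hb : ∀ i, x i / x j₀ ∈ v.valuationSubring := by
      intro i
      rw [Valuation.mem_valuationSubring_iff, map_div₀]
      exact div_le_one_of_le₀ (hj₀ i (Finset.mem_univ _)) zero_le'
    set B : Fin N → v.valuationSubring := fun i => ⟨x i / x j₀, hb i⟩ with hB
    have hBj₀ : B j₀ = 1 := by ext; simp [hB, div_self hxj₀]
    set b : v.valuationSubring := ∑ i, B i ^ 2 with hbdef
    have hresb : residue _ b ≠ 0 := by
      rw [hbdef, map_sum]
      simp only [map_pow]
      exact aux_sum_ne_zero hreal _ j₀ (by rw [hBj₀, map_one])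
    obtain ⟨zb, hzb⟩ := hk (residue _ b)
      ⟨N, fun i => residue _ (B i), by rw [hbdef, map_sum]; simp only [map_pow]⟩
    choose Z hZ using fun l => residue_surjective (R := v.valuationSubring) (zb l)
    set c : v.valuationSubring := ∑ l, Z l ^ 2 with hcdef
    have hresc : residue _ c = residue _ b := by
      rw [hcdef, map_sum]
      simp only [map_pow, hZ]
      exact hzb.symm
    have hcunit : IsUnit c := by
      rw [← notMem_maximalIdeal, ← residue_eq_zero_iff, hresc]
      exact hresb
    obtain ⟨cu, hcu⟩ := hcunit
    have hu : residue _ (b * ↑cu⁻¹ : v.valuationSubring) = 1 := by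
      rw [map_mul, ← hresc, ← map_mul, ← hcu, Units.mul_inv, map_one]
    obtain ⟨w, hw⟩ := aux_sq_lift h2' hu
    have hbw : b = ∑ l, (w * Z l) ^ 2 := by
      have h1 : w ^ 2 * c = b := by
        rw [hw, ← hcu, mul_assoc]
        simp
      rw [← h1, hcdef, Finset.mul_sum]
      exact Finset.sum_congr rfl fun l _ => by ring
    refine ⟨fun l => x j₀ * ((w * Z l : v.valuationSubring) : K), ?_⟩
    have hsum : (∑ i, x i ^ 2 : K) = x j₀ ^ 2 * ((b : v.valuationSubring) : K) := by
      have hcoe : ((b : v.valuationSubring) : K) = ∑ i, (x i / x j₀) ^ 2 := by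
        rw [hbdef]; push_cast [hB]; rfl
      rw [hcoe, Finset.mul_sum]
      refine Finset.sum_congr rfl fun i _ => ?_
      field_simp
    rw [hsum, hbw]
    push_cast
    rw [Finset.mul_sum]
    exact Finset.sum_congr rfl fun l _ => by ring
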